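/- Let f : [u,u']×[v,v'] → ℝ be continuous with sup|f| ≤ M. Then there exists a continuous function k on the rectangle satisfying k(s,t) = 1 + ∫_u^s ∫_v^t k(p,q) f(p,q) dq dp, and it satisfies the bound |k(s,t)| ≤ Σ_{n≥0} M^n (s−u)^n (t−v)^n / (n!)² for all (s,t). -/

import Mathlib

open MeasureTheory Set

noncomputable section

namespace Stmt10Aux

/-- Picard iterates (the individual terms of the series). -/
def g (u v : ℝ) (F : ℝ → ℝ → ℝ) : ℕ → ℝ → ℝ → ℝ
  | 0 => fun _ _ => 1
  | n + 1 => fun s t => ∫ p in u..s, ∫ q in v..t, g u v F n p q * F p q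

variable {u v M u' v' : ℝ} {F : ℝ → ℝ → ℝ}

lemma cont_g (hF : Continuous fun z : ℝ × ℝ => F z.1 z.2) :
    ∀ n, Continuous fun z : ℝ × ℝ => g u v F n z.1 z.2 := by
  intro n
  induction n with
  | zero => exact continuous_const
  | succ n IH =>
    have hmul : Continuous fun z : ℝ × ℝ => g u v F n z.1 z.2 * F z.1 z.2 := IH.mul hF
    show Continuous fun z : ℝ × ℝ =>
      ∫ p in u..z.1, (fun (z : ℝ × ℝ) (p : ℝ) => ∫ q in v..z.2, g u v F n p q * F p q) z p
    apply intervalIntegral.continuous_parametric_intervalIntegral_of_continuous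
      (μ := volume) (a₀ := u)
      (f := fun (z : ℝ × ℝ) (p : ℝ) => ∫ q in v..z.2, g u v F n p q * F p q)
      (s := fun z => z.1) ?_ continuous_fst
    show Continuous fun y : (ℝ × ℝ) × ℝ =>
      ∫ q in v..(fun y : (ℝ × ℝ) × ℝ => y.1.2) y,
        (fun (y : (ℝ × ℝ) × ℝ) (q : ℝ) => g u v F n y.2 q * F y.2 q) y q
    apply intervalIntegral.continuous_parametric_intervalIntegral_of_continuous
      (μ := volume) (a₀ := v)
      (f := fun (y : (ℝ × ℝ) × ℝ) (q : ℝ) => g u v F n y.2 q * F y.2 q)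
      (s := fun y => y.1.2)
      (hmul.comp ((continuous_fst.snd).prodMk continuous_snd)) (continuous_fst.snd)

/-- Continuity of the inner integral as a function of the outer variable. -/
lemma cont_inner (hF : Continuous fun z : ℝ × ℝ => F z.1 z.2) (n : ℕ) (t : ℝ) :
    Continuous fun p : ℝ => ∫ q in v..t, g u v F n p q * F p q := by
  have hmul : Continuous fun z : ℝ × ℝ => g u v F n z.1 z.2 * F z.1 z.2 :=
    (cont_g hF n).mul hF
  exact intervalIntegral.continuous_parametric_intervalIntegral_of_continuous'
    (μ := volume) (f := fun (p q : ℝ) => g u v F n p q * F p q) hmul v t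

lemma integral_pow_sub (a b : ℝ) (n : ℕ) :
    ∫ x in a..b, (x - a) ^ n = (b - a) ^ (n + 1) / (n + 1) := by
  rw [intervalIntegral.integral_comp_sub_right (fun x => x ^ n) a, sub_self,
    integral_pow, zero_pow (Nat.succ_ne_zero n), sub_zero]

lemma g_bound (hF : Continuous fun z : ℝ × ℝ => F z.1 z.2) (hM0 : 0 ≤ M)
    (hFb : ∀ s t, |F s t| ≤ M) :
    ∀ n, ∀ s t : ℝ, u ≤ s → v ≤ t →
      |g u v F n s t| ≤ M ^ n * (s - u) ^ n * (t - v) ^ n / ((n.factorial : ℝ)) ^ 2 := by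
  intro n
  induction n with
  | zero => intro s t _ _; simp [g]
  | succ n IH =>
    intro s t hs ht
    set inner : ℝ → ℝ := fun p => ∫ q in v..t, g u v F n p q * F p q with hinner_def
    have hcont_inner : Continuous inner := cont_inner hF n t
    have hfac : (0:ℝ) < (n.factorial : ℝ) := by exact_mod_cast n.factorial_pos
    have key : ∀ p ∈ Icc u s, |inner p| ≤
        (M ^ (n+1) * (t - v) ^ (n+1) / ((n.factorial : ℝ) ^ 2 * (n + 1))) * (p - u) ^ n := by
      intro p hp
      have hpu : (0:ℝ) ≤ p - u := sub_nonneg.2 hp.1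
      have h1 : |inner p| ≤ ∫ q in v..t, |g u v F n p q * F p q| :=
        intervalIntegral.abs_integral_le_integral_abs ht
      have hcont2 : Continuous fun q : ℝ => g u v F n p q * F p q :=
        ((cont_g hF n).mul hF).comp (continuous_const.prodMk continuous_id)
      have h2 : (∫ q in v..t, |g u v F n p q * F p q|) ≤
          ∫ q in v..t, (M ^ (n+1) * (p - u) ^ n / ((n.factorial : ℝ)) ^ 2) * (q - v) ^ n := by
        apply intervalIntegral.integral_mono_on ht
          (hcont2.abs.intervalIntegrable v t)
          ((Continuous.intervalIntegrable (by continuity) v t))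
        intro q hq
        have hqv : (0:ℝ) ≤ q - v := sub_nonneg.2 hq.1
        have hb : |g u v F n p q| ≤ M ^ n * (p - u) ^ n * (q - v) ^ n / ((n.factorial : ℝ)) ^ 2 :=
          IH p q hp.1 hq.1
        have : |g u v F n p q * F p q| ≤
            (M ^ n * (p - u) ^ n * (q - v) ^ n / ((n.factorial : ℝ)) ^ 2) * M := by
          rw [abs_mul]
          exact mul_le_mul hb (hFb p q) (abs_nonneg _) (by positivity)
        calc |g u v F n p q * F p q| ≤
            (M ^ n * (p - u) ^ n * (q - v) ^ n / ((n.factorial : ℝ)) ^ 2) * M := this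
          _ = (M ^ (n+1) * (p - u) ^ n / ((n.factorial : ℝ)) ^ 2) * (q - v) ^ n := by ring
      have h3 : (∫ q in v..t, (M ^ (n+1) * (p - u) ^ n / ((n.factorial : ℝ)) ^ 2) * (q - v) ^ n)
          = (M ^ (n+1) * (p - u) ^ n / ((n.factorial : ℝ)) ^ 2) * ((t - v) ^ (n+1) / (n+1)) := by
        rw [intervalIntegral.integral_const_mul, integral_pow_sub]
      calc |inner p| ≤ _ := h1
        _ ≤ _ := h2
        _ = (M ^ (n+1) * (p - u) ^ n / ((n.factorial : ℝ)) ^ 2) * ((t - v) ^ (n+1) / (n+1)) := h3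
        _ = (M ^ (n+1) * (t - v) ^ (n+1) / ((n.factorial : ℝ) ^ 2 * (n + 1))) * (p - u) ^ n := by
            field_simp
    have h4 : |g u v F (n+1) s t| ≤ ∫ p in u..s, |inner p| :=
      intervalIntegral.abs_integral_le_integral_abs hs
    have h5 : (∫ p in u..s, |inner p|) ≤
        ∫ p in u..s, (M ^ (n+1) * (t - v) ^ (n+1) / ((n.factorial : ℝ) ^ 2 * (n + 1))) *
          (p - u) ^ n := by
      apply intervalIntegral.integral_mono_on hs
        (hcont_inner.abs.intervalIntegrable u s)
        (Continuous.intervalIntegrable (by continuity) u s)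
      exact key
    have h6 : (∫ p in u..s, (M ^ (n+1) * (t - v) ^ (n+1) /
          ((n.factorial : ℝ) ^ 2 * (n + 1))) * (p - u) ^ n)
        = (M ^ (n+1) * (t - v) ^ (n+1) / ((n.factorial : ℝ) ^ 2 * (n + 1))) *
          ((s - u) ^ (n+1) / (n+1)) := by
      rw [intervalIntegral.integral_const_mul, integral_pow_sub]
    have hfact : ((n+1).factorial : ℝ) = (n + 1) * (n.factorial : ℝ) := by
      rw [Nat.factorial_succ]; push_cast; ring
    calc |g u v F (n+1) s t| ≤ _ := h4
      _ ≤ _ := h5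
      _ = (M ^ (n+1) * (t - v) ^ (n+1) / ((n.factorial : ℝ) ^ 2 * (n + 1))) *
          ((s - u) ^ (n+1) / (n+1)) := h6
      _ = M ^ (n+1) * (s - u) ^ (n+1) * (t - v) ^ (n+1) / (((n+1).factorial : ℝ)) ^ 2 := by
          rw [hfact]; field_simp

lemma summable_bound {M a b : ℝ} (hM : 0 ≤ M) (ha : 0 ≤ a) (hb : 0 ≤ b) :
    Summable fun n : ℕ => M ^ n * a ^ n * b ^ n / ((n.factorial : ℝ)) ^ 2 := by
  apply Summable.of_nonneg_of_le (fun n => by positivity) (fun n => ?_)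
    (Real.summable_pow_div_factorial (M * a * b))
  have h1 : (1:ℝ) ≤ (n.factorial : ℝ) := by exact_mod_cast n.factorial_pos
  have h2 : (n.factorial : ℝ) ≤ ((n.factorial : ℝ)) ^ 2 := by nlinarith
  rw [mul_pow, mul_pow]
  exact div_le_div_of_nonneg_left (by positivity) (by positivity) h2 |>.trans_eq rfl

end Stmt10Aux

open Stmt10Aux

/-- Existence for the Goursat-type Volterra integral equation with bounded
continuous coefficient, together with the factorial-squared bound. -/
theorem stmt10 (u u' v v' M : ℝ) (hu : u ≤ u') (hv : v ≤ v') (f : ℝ → ℝ → ℝ)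
    (hf : ContinuousOn (fun p : ℝ × ℝ => f p.1 p.2) (Icc u u' ×ˢ Icc v v'))
    (hM : ∀ s ∈ Icc u u', ∀ t ∈ Icc v v', |f s t| ≤ M) :
    ∃ k : ℝ → ℝ → ℝ,
      ContinuousOn (fun p : ℝ × ℝ => k p.1 p.2) (Icc u u' ×ˢ Icc v v') ∧
      (∀ s ∈ Icc u u', ∀ t ∈ Icc v v',
        k s t = 1 + ∫ p in u..s, ∫ q in v..t, k p q * f p q) ∧
      (∀ s ∈ Icc u u', ∀ t ∈ Icc v v',
        |k s t| ≤ ∑' n : ℕ,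
          M ^ n * (s - u) ^ n * (t - v) ^ n / ((n.factorial : ℝ)) ^ 2) := by
  -- clamp maps
  set cu : ℝ → ℝ := fun s => max u (min s u') with hcu_def
  set cv : ℝ → ℝ := fun t => max v (min t v') with hcv_def
  have hcu_mem : ∀ s, cu s ∈ Icc u u' := fun s =>
    ⟨le_max_left _ _, max_le hu (min_le_right _ _)⟩
  have hcv_mem : ∀ t, cv t ∈ Icc v v' := fun t =>
    ⟨le_max_left _ _, max_le hv (min_le_right _ _)⟩
  have hcu_eq : ∀ s ∈ Icc u u', cu s = s := fun s hs => by
    simp only [hcu_def, min_eq_left hs.2, max_eq_right hs.1]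
  have hcv_eq : ∀ t ∈ Icc v v', cv t = t := fun t ht => by
    simp only [hcv_def, min_eq_left ht.2, max_eq_right ht.1]
  set F : ℝ → ℝ → ℝ := fun s t => f (cu s) (cv t) with hF_def
  have hF : Continuous fun z : ℝ × ℝ => F z.1 z.2 := by
    have hcuc : Continuous cu := continuous_const.max (continuous_id.min continuous_const)
    have hcvc : Continuous cv := continuous_const.max (continuous_id.min continuous_const)
    have hc : Continuous fun z : ℝ × ℝ => ((cu z.1, cv z.2) : ℝ × ℝ) :=
      (hcuc.comp continuous_fst).prodMk (hcvc.comp continuous_snd)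
    exact hf.comp_continuous hc fun z => ⟨hcu_mem _, hcv_mem _⟩
  have hFb : ∀ s t, |F s t| ≤ M := fun s t => hM _ (hcu_mem s) _ (hcv_mem t)
  have hFf : ∀ s ∈ Icc u u', ∀ t ∈ Icc v v', F s t = f s t := fun s hs t ht => by
    simp only [hF_def, hcu_eq s hs, hcv_eq t ht]
  have hM0 : 0 ≤ M := le_trans (abs_nonneg _) (hM u ⟨le_refl u, hu⟩ v ⟨le_refl v, hv⟩)
  -- the solution
  set k : ℝ → ℝ → ℝ := fun s t => ∑' n, g u v F n s t with hk_def
  have hbd := g_bound (u := u) (v := v) hF hM0 hFb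
  have hgc := cont_g (u := u) (v := v) hF
  -- uniform bound on the rectangle
  set B : ℕ → ℝ := fun n => M ^ n * (u' - u) ^ n * (v' - v) ^ n / ((n.factorial : ℝ)) ^ 2
    with hB_def
  have hBsum : Summable B := summable_bound hM0 (sub_nonneg.2 hu) (sub_nonneg.2 hv)
  have hBpos : ∀ n, 0 ≤ B n := fun n => by
    simp only [hB_def]
    have h1 : (0:ℝ) ≤ u' - u := sub_nonneg.2 hu
    have h2 : (0:ℝ) ≤ v' - v := sub_nonneg.2 hv
    exact div_nonneg (mul_nonneg (mul_nonneg (pow_nonneg hM0 n) (pow_nonneg h1 n))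
      (pow_nonneg h2 n)) (by positivity)
  have hgB : ∀ n, ∀ s ∈ Icc u u', ∀ t ∈ Icc v v', |g u v F n s t| ≤ B n := by
    intro n s hs t ht
    refine (hbd n s t hs.1 ht.1).trans ?_
    have h1 : s - u ≤ u' - u := by linarith [hs.2]
    have h2 : t - v ≤ v' - v := by linarith [ht.2]
    have h3 : (0:ℝ) ≤ s - u := sub_nonneg.2 hs.1
    have h4 : (0:ℝ) ≤ t - v := sub_nonneg.2 ht.1
    simp only [hB_def]
    have h5 : (0:ℝ) ≤ u' - u := sub_nonneg.2 hu
    have h6 : (0:ℝ) ≤ v' - v := sub_nonneg.2 hv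
    gcongr <;> first
      | assumption
      | positivity
      | exact mul_nonneg (pow_nonneg hM0 n) (pow_nonneg h5 n)
  -- summability pointwise
  have hsum_pt : ∀ s ∈ Icc u u', ∀ t ∈ Icc v v', Summable fun n => g u v F n s t := by
    intro s hs t ht
    exact Summable.of_norm_bounded hBsum fun n => by
      rw [Real.norm_eq_abs]; exact hgB n s hs t ht
  refine ⟨k, ?_, ?_, ?_⟩
  · -- continuity on the rectangle
    have huc : TendstoUniformlyOn
        (fun (T : Finset ℕ) (z : ℝ × ℝ) => ∑ n ∈ T, g u v F n z.1 z.2)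
        (fun z : ℝ × ℝ => ∑' n, g u v F n z.1 z.2) Filter.atTop
        (Icc u u' ×ˢ Icc v v') := by
      apply tendstoUniformlyOn_tsum hBsum
      intro n z hz
      rw [Real.norm_eq_abs]
      exact hgB n z.1 hz.1 z.2 hz.2
    exact huc.continuousOn (Filter.Frequently.of_forall fun T =>
      (continuous_finset_sum T fun n _ => hgc n).continuousOn)
  · -- the integral equation
    intro s hs t ht
    -- inner interchange
    have inner_hs : ∀ p ∈ Icc u u',
        HasSum (fun n => ∫ q in v..t, g u v F n p q * F p q)
          (∫ q in v..t, k p q * F p q) := by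
      intro p hp
      set φ : ℕ → C(ℝ, ℝ) := fun n =>
        ⟨fun q => g u v F n p q * F p q,
          ((hgc n).mul hF).comp (continuous_const.prodMk continuous_id)⟩ with hφ_def
      have hsum : Summable fun n => ‖(φ n).restrict (⟨uIcc v t, isCompact_uIcc⟩ : TopologicalSpace.Compacts ℝ)‖ := by
        apply Summable.of_nonneg_of_le (fun n => norm_nonneg _) (fun n => ?_)
          (hBsum.mul_right M)
        apply ContinuousMap.norm_le _ (mul_nonneg (hBpos n) hM0) |>.2
        rintro ⟨q, hq⟩
        have hq2 : q ∈ Icc v t := by rw [← uIcc_of_le ht.1]; exact hq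
        have hq' : q ∈ Icc v v' := ⟨hq2.1, hq2.2.trans ht.2⟩
        simp only [ContinuousMap.restrict_apply, Real.norm_eq_abs, hφ_def,
          ContinuousMap.coe_mk, abs_mul]
        exact mul_le_mul (hgB n p hp q hq') (hFb p q) (abs_nonneg _)
          ((abs_nonneg _).trans (hgB n p hp q hq'))
      have := intervalIntegral.hasSum_intervalIntegral_of_summable_norm
        (a := v) (b := t) hsum
      have heq : (∫ q in v..t, ∑' n, (φ n) q) = ∫ q in v..t, k p q * F p q := by
        apply intervalIntegral.integral_congr
        intro q _
        show (∑' n, (φ n) q) = k p q * F p q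
        simp only [hφ_def, ContinuousMap.coe_mk, hk_def]
        rw [tsum_mul_right]
      rwa [heq] at this
    -- outer interchange
    have outer_hs : HasSum (fun n => ∫ p in u..s, ∫ q in v..t, g u v F n p q * F p q)
        (∫ p in u..s, ∑' n, ∫ q in v..t, g u v F n p q * F p q) := by
      set ψ : ℕ → C(ℝ, ℝ) := fun n =>
        ⟨fun p => ∫ q in v..t, g u v F n p q * F p q, cont_inner hF n t⟩ with hψ_def
      have hsum : Summable fun n => ‖(ψ n).restrict (⟨uIcc u s, isCompact_uIcc⟩ : TopologicalSpace.Compacts ℝ)‖ := by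
        apply Summable.of_nonneg_of_le (fun n => norm_nonneg _) (fun n => ?_)
          ((hBsum.mul_right M).mul_right (v' - v))
        apply ContinuousMap.norm_le _ (mul_nonneg (mul_nonneg (hBpos n) hM0) (sub_nonneg.2 hv)) |>.2
        rintro ⟨p, hp⟩
        have hp2 : p ∈ Icc u s := by rw [← uIcc_of_le hs.1]; exact hp
        have hp' : p ∈ Icc u u' := ⟨hp2.1, hp2.2.trans hs.2⟩
        simp only [ContinuousMap.restrict_apply, Real.norm_eq_abs, hψ_def,
          ContinuousMap.coe_mk]
        have h1 : ‖∫ q in v..t, g u v F n p q * F p q‖ ≤ (B n * M) * |t - v| := by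
          apply intervalIntegral.norm_integral_le_of_norm_le_const
          intro q hq
          rw [uIoc_of_le ht.1] at hq
          have hq' : q ∈ Icc v v' := ⟨hq.1.le, hq.2.trans ht.2⟩
          rw [Real.norm_eq_abs, abs_mul]
          exact mul_le_mul (hgB n p hp' q hq') (hFb p q) (abs_nonneg _)
            ((abs_nonneg _).trans (hgB n p hp' q hq'))
        rw [Real.norm_eq_abs] at h1
        refine h1.trans ?_
        have : |t - v| ≤ v' - v := by
          rw [abs_of_nonneg (sub_nonneg.2 ht.1)]; linarith [ht.2]
        have hBn : (0:ℝ) ≤ B n * M := by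
          have := (abs_nonneg (g u v F n u v)).trans (hgB n u ⟨le_refl u, hu⟩ v ⟨le_refl v, hv⟩)
          positivity
        exact mul_le_mul_of_nonneg_left this hBn
      exact intervalIntegral.hasSum_intervalIntegral_of_summable_norm (a := u) (b := s) hsum
    have houter : (∫ p in u..s, ∑' n, ∫ q in v..t, g u v F n p q * F p q)
        = ∫ p in u..s, ∫ q in v..t, k p q * F p q := by
      apply intervalIntegral.integral_congr
      intro p hp
      rw [uIcc_of_le hs.1] at hp
      have hp' : p ∈ Icc u u' := ⟨hp.1, hp.2.trans hs.2⟩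
      exact (inner_hs p hp').tsum_eq
    have hksum : Summable fun n => g u v F n s t := hsum_pt s hs t ht
    have hsplit : k s t = 1 + ∑' n, g u v F (n+1) s t := by
      rw [hk_def]
      simp only []
      rw [Summable.tsum_eq_zero_add hksum]
      rfl
    have hFtof : (∫ p in u..s, ∫ q in v..t, k p q * F p q)
        = ∫ p in u..s, ∫ q in v..t, k p q * f p q := by
      apply intervalIntegral.integral_congr
      intro p hp
      rw [uIcc_of_le hs.1] at hp
      have hp' : p ∈ Icc u u' := ⟨hp.1, hp.2.trans hs.2⟩
      apply intervalIntegral.integral_congr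
      intro q hq
      rw [uIcc_of_le ht.1] at hq
      have hq' : q ∈ Icc v v' := ⟨hq.1, hq.2.trans ht.2⟩
      show k p q * F p q = k p q * f p q
      rw [hFf p hp' q hq']
    rw [hsplit, ← hFtof]
    congr 1
    have : (fun n => ∫ p in u..s, ∫ q in v..t, g u v F n p q * F p q)
        = fun n => g u v F (n+1) s t := rfl
    rw [← houter]
    exact (this ▸ outer_hs).tsum_eq
  · -- the bound
    intro s hs t ht
    have h1 : |k s t| ≤ ∑' n, |g u v F n s t| := by
      have := norm_tsum_le_tsum_norm (f := fun n => g u v F n s t) ?_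
      · simpa [Real.norm_eq_abs] using this
      · exact Summable.of_nonneg_of_le (fun n => norm_nonneg _)
          (fun n => by rw [Real.norm_eq_abs]; exact hgB n s hs t ht) hBsum
    refine h1.trans (Summable.tsum_le_tsum (fun n => hbd n s t hs.1 ht.1) ?_ ?_)
    · exact Summable.of_nonneg_of_le (fun n => abs_nonneg _)
        (fun n => hgB n s hs t ht) hBsum
    · exact summable_bound hM0 (sub_nonneg.2 hs.1) (sub_nonneg.2 ht.1)

end
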